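/- Let n ≥ 2, let w = x_0 x_1 … x_{2n−1} be a left preferred Gauss code on n letters, and let k ∈ {1,…,n−1}. Let m be the position with x_m = (k+1, L), and let π be the permutation of {1,…,n} sending i to i − k (mod n). Then (shift^LP)^k(w) = shift[m](π_*(w)). -/

import Mathlib

/-- A Gauss code on `n` letters: a bijection from the `2*n` positions to
letters paired with a side (`false` = L, `true` = R). -/
abbrev GaussCode (n : ℕ) := Fin (2 * n) ≃ Fin n × Bool

instance (n : ℕ) [NeZero n] : NeZero (2 * n) := ⟨by have := NeZero.ne n; omega⟩

namespace GaussCode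

variable {n : ℕ}

/-- `π_*(w)`: relabel the letters by the permutation `π`. -/
def permAct (π : Equiv.Perm (Fin n)) (w : GaussCode n) : GaussCode n :=
  w.trans (π.prodCongr (Equiv.refl Bool))

open Fin.NatCast in
/-- `shift[m](w)`: the code whose entry at position `i` is the entry of `w` at
position `i + m` (mod `2n`). -/
def shift [NeZero n] (m : ℕ) (w : GaussCode n) : GaussCode n :=
  (Equiv.addRight ((m : Fin (2 * n)))).trans w

/-- `rev(w)`: the code whose entry at position `i` is the entry of `w` at
position `2n - 1 - i`. -/
def rev (w : GaussCode n) : GaussCode n :=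
  (Fin.revPerm).trans w

/-- A Gauss code is left preferred if its `L`-entries appear in the order
`(1,L), (2,L), …, (n,L)` and its entry at position `0` is `(1,L)`. -/
def IsLeftPreferred [NeZero n] (w : GaussCode n) : Prop :=
  StrictMono (fun j : Fin n => w.symm (j, false)) ∧ w 0 = (0, false)

/-- `proj^LP(w)`: relabel letters in the order of appearance of their `L`-entries,
then rotate so that `(1,L)` is at position `0`. -/
def projLP [NeZero n] (w : GaussCode n) : GaussCode n :=
  let π : Equiv.Perm (Fin n) := (Tuple.sort (fun j : Fin n => w.symm (j, false)))⁻¹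
  let w' := permAct π w
  shift ((w'.symm ((0 : Fin n), false)).val) w'

/-- `shift^LP(w) := proj^LP(shift[1](w))`. -/
def shiftLP [NeZero n] (w : GaussCode n) : GaussCode n :=
  projLP (shift 1 w)

/-- `rev^LP(w) := proj^LP(rev(w))`. -/
def revLP [NeZero n] (w : GaussCode n) : GaussCode n :=
  projLP (rev w)

/-- The value of an entry in the order `(1,L) < (1,R) < (2,L) < (2,R) < …`. -/
def entryKey (e : Fin n × Bool) : ℕ :=
  2 * e.1.val + (if e.2 then 1 else 0)

/-- Lexicographic (strict) order on Gauss codes, comparing entries position by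
position in the order `(1,L) < (1,R) < (2,L) < (2,R) < …`. -/
def lexLt (w w' : GaussCode n) : Prop :=
  ∃ i : Fin (2 * n), (∀ k, k < i → w k = w' k) ∧ entryKey (w i) < entryKey (w' i)

/-- Lexicographic order on Gauss codes. -/
def lexLe (w w' : GaussCode n) : Prop :=
  w = w' ∨ lexLt w w'

/-- A left preferred Gauss code is left canonical if it is the smallest element
of its `shift^LP`-orbit `{w, shift^LP(w), …, (shift^LP)^{n-1}(w)}`. -/
def IsLeftCanonical [NeZero n] (w : GaussCode n) : Prop :=
  IsLeftPreferred w ∧ ∀ k < n, lexLe w (shiftLP^[k] w)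

/-- `proj^LC(w)`: the smallest element of the `shift^LP`-orbit of `proj^LP(w)`. -/
noncomputable def projLC [NeZero n] (w : GaussCode n) : GaussCode n :=
  letI := Classical.propDecidable
  if h : ∃ v : GaussCode n, (∃ k < n, v = shiftLP^[k] (projLP w)) ∧
      ∀ k < n, lexLe v (shiftLP^[k] (projLP w))
  then h.choose else projLP w

/-- `rev^LC(w) := proj^LC(rev(w))`. -/
noncomputable def revLC [NeZero n] (w : GaussCode n) : GaussCode n :=
  projLC (rev w)

/-- Oriented equivalence of Gauss codes: `w' = shift[m](π_*(w))` for some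
permutation `π` and integer `m`. -/
def OrientedEquiv [NeZero n] (w w' : GaussCode n) : Prop :=
  ∃ (π : Equiv.Perm (Fin n)) (m : ℕ), w' = shift m (permAct π w)

/-- Unoriented equivalence: `w` is orientedly equivalent to `w'` or to `rev(w')`. -/
def UnorientedEquiv [NeZero n] (w w' : GaussCode n) : Prop :=
  OrientedEquiv w w' ∨ OrientedEquiv w (rev w')

/-- A Gauss code is 1-reducible if two cyclically adjacent entries share the same letter. -/
def OneReducible [NeZero n] (w : GaussCode n) : Prop :=
  ∃ i : Fin (2 * n), (w i).1 = (w (i + 1)).1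

/-- A Gauss code is 2-reducible (cyclically, with `L = false`, `R = true`). -/
def TwoReducible [NeZero n] (w : GaussCode n) : Prop :=
  ∃ (i i' : Fin (2 * n)) (j k : Fin n), j ≠ k ∧
    ((w i = (j, false) ∧ w (i + 1) = (k, true) ∧
        w i' = (j, true) ∧ w (i' + 1) = (k, false)) ∨
     (w i = (j, false) ∧ w (i + 1) = (k, true) ∧
        w i' = (k, false) ∧ w (i' + 1) = (j, true)) ∨
     (w i = (j, true) ∧ w (i + 1) = (k, false) ∧
        w i' = (k, true) ∧ w (i' + 1) = (j, false)))

/-- A Gauss code is minimal if it is neither 1-reducible nor 2-reducible. -/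
def IsMinimal [NeZero n] (w : GaussCode n) : Prop :=
  ¬ OneReducible w ∧ ¬ TwoReducible w

/-- `σ_w`: the involution of positions sending each position to the unique other
position carrying the same letter. -/
def sigmaMap (w : GaussCode n) : Fin (2 * n) → Fin (2 * n) :=
  fun i => w.symm ((w i).1, !(w i).2)

/-- `h_w`: the side (`false` = L, `true` = R) of the entry at each position. -/
def hMap (w : GaussCode n) : Fin (2 * n) → Bool :=
  fun i => (w i).2

end GaussCode

namespace GaussCode

variable {n : ℕ}

open Fin.NatCast

-- helpers
lemma shift_apply [NeZero n] (m : ℕ) (w : GaussCode n) (i : Fin (2*n)) :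
    shift m w i = w (i + (m : Fin (2*n))) := rfl

lemma shift_shift [NeZero n] (a b : ℕ) (w : GaussCode n) :
    shift a (shift b w) = shift (a + b) w := by
  apply Equiv.ext; intro i
  simp only [shift_apply]; congr 1; push_cast; abel

lemma permAct_shift [NeZero n] (π : Equiv.Perm (Fin n)) (m : ℕ) (w : GaussCode n) :
    permAct π (shift m w) = shift m (permAct π w) := rfl

lemma permAct_permAct (π π' : Equiv.Perm (Fin n)) (w : GaussCode n) :
    permAct π' (permAct π w) = permAct (π.trans π') w := by
  apply Equiv.ext; intro i; rfl

lemma shift_symm_apply [NeZero n] (m : ℕ) (w : GaussCode n) (e : Fin n × Bool) :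
    (shift m w).symm e = w.symm e - (m : Fin (2*n)) := by
  simp [shift, Equiv.addRight, sub_eq_add_neg]

lemma permAct_symm_apply (π : Equiv.Perm (Fin n)) (w : GaussCode n) (j : Fin n) (s : Bool) :
    (permAct π w).symm (j, s) = w.symm (π.symm j, s) := rfl

lemma sort_eq_addRight_one [NeZero n] (f : Fin n → Fin (2*n)) (hf : Function.Injective f)
    (hsm : StrictMono (fun i => f (i + 1))) :
    Tuple.sort f = Equiv.addRight (1 : Fin n) := by
  symm
  rw [Tuple.eq_sort_iff]
  refine ⟨?_, ?_⟩
  · intro i j hij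
    rcases eq_or_lt_of_le hij with rfl | h
    · exact le_rfl
    · exact le_of_lt (hsm h)
  · intro i j hij hfe
    have h2 : (Equiv.addRight (1:Fin n)) i = (Equiv.addRight (1:Fin n)) j := hf hfe
    simp only [Equiv.coe_addRight] at h2
    have : i = j := by
      have := congrArg (· - (1:Fin n)) h2
      simpa using this
    omega

theorem key [NeZero n] (hn : 2 ≤ n) (w : GaussCode n) (hw : IsLeftPreferred w) :
    ∀ k, ∀ hk : k < n, shiftLP^[k] w =
      shift ((w.symm ((⟨k, hk⟩ : Fin n), false)).val)
        (permAct (Equiv.subRight ((k : Fin n))) w) := by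
  have hn0 : 0 < n := by omega
  set p : ℕ → ℕ := fun m => (w.symm ((⟨m % n, Nat.mod_lt _ hn0⟩ : Fin n), false)).val with hp
  have hpcongr : ∀ a b : ℕ, a % n = b % n → p a = p b := by
    intro a b h; simp only [hp, h]
  have hpmono : ∀ a b : ℕ, a % n < b % n → p a < p b := by
    intro a b h
    exact hw.1 (show (⟨a % n, Nat.mod_lt _ hn0⟩ : Fin n) < ⟨b % n, Nat.mod_lt _ hn0⟩ from h)
  have hplt : ∀ a, p a < 2 * n := fun a => (w.symm _).isLt
  have hone : ((1 : Fin n)).val = 1 := by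
    rw [Fin.val_one']; exact Nat.mod_eq_of_lt (by omega)
  have hmod2 : ∀ x : ℕ, 2*n ≤ x → x < 2*(2*n) → x % (2*n) = x - 2*n := by
    intro x h1 h2
    rw [Nat.mod_eq_sub_mod h1, Nat.mod_eq_of_lt (by omega)]
  have hpklt : ∀ k : ℕ, k + 1 < n → p k + 1 < 2 * n := by
    intro k hk1
    have h1 : p k < p (k+1) := hpmono k (k+1) (by
      rw [Nat.mod_eq_of_lt (by omega), Nat.mod_eq_of_lt (by omega)]; omega)
    have := hplt (k+1); omega
  intro k
  induction k with
  | zero =>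
    intro hk
    have h0 : (⟨0, hk⟩ : Fin n) = 0 := rfl
    have hs : w.symm (0, false) = 0 := by
      rw [Equiv.symm_apply_eq]; exact hw.2.symm
    rw [h0, hs]
    apply Equiv.ext
    intro i
    show w i = _
    simp only [shift_apply, permAct, Equiv.subRight, Nat.cast_zero, add_zero,
      Equiv.trans_apply, Equiv.prodCongr_apply, Equiv.coe_refl, Equiv.coe_fn_mk,
      Prod.map, sub_zero, Fin.val_zero, id_eq, Prod.mk.eta]
  | succ k ih =>
    intro hk1
    have hk : k < n := by omega
    rw [Function.iterate_succ_apply', ih hk]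
    set π : Equiv.Perm (Fin n) := Equiv.subRight ((k : Fin n)) with hπ
    set b : ℕ := p k + 1 with hb
    have hpk : (w.symm ((⟨k, hk⟩ : Fin n), false)).val = p k := by
      apply congrArg
      apply congrArg
      apply congrArg (fun j => (j, false))
      exact Fin.ext (Nat.mod_eq_of_lt hk).symm
    have hb2 : b < 2 * n := hpklt k hk1
    rw [hpk, shiftLP, shift_shift]
    have h1pk : 1 + p k = b := by omega
    rw [h1pk]
    set u : GaussCode n := shift b (permAct π w) with hu
    -- value of u.symm (j, false)
    have hπsymm : ∀ j : Fin n, π.symm j = ⟨(j.val + k) % n, Nat.mod_lt _ hn0⟩ := by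
      intro j
      apply Fin.ext
      show (j + (k : Fin n)).val = (j.val + k) % n
      rw [Fin.add_def, Fin.val_natCast]
      show (↑j + k % n) % n = (↑j + k) % n
      rw [Nat.add_mod_mod]
    have hfval : ∀ j : Fin n, (u.symm (j, false)).val = (2*n - b + p (j.val + k)) % (2*n) := by
      intro j
      rw [hu, shift_symm_apply, permAct_symm_apply, hπsymm, Fin.sub_def]
      show (2*n - ((b:ℕ) : Fin (2*n)).val + _) % (2*n) = _
      rw [Fin.val_natCast, Nat.mod_eq_of_lt hb2]
    -- monotonicity facts
    have hlow : ∀ c : ℕ, c + 1 + k < n → b ≤ p (c+1+k) := by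
      intro c h
      have : p k < p (c+1+k) := hpmono k (c+1+k) (by
        rw [Nat.mod_eq_of_lt hk, Nat.mod_eq_of_lt h]; omega)
      omega
    have hhigh : ∀ c : ℕ, c < n - 1 → n ≤ c + 1 + k → p (c+1+k) + 1 < b := by
      intro c h1 h2
      have hmn : (c+1+k) % n = c+1+k-n := by
        rw [Nat.mod_eq_sub_mod h2, Nat.mod_eq_of_lt (by omega)]
      have : p (c+1+k) < p k := hpmono (c+1+k) k (by
        rw [hmn, Nat.mod_eq_of_lt hk]; omega)
      omega
    have htop : p ((n-1) + 1 + k) = p k := by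
      apply hpcongr
      have he : n - 1 + 1 + k = n + k := by omega
      rw [he, Nat.add_mod_left]
    have hval : ∀ c : ℕ, c < n →
        (2*n - b + p (c+1+k)) % (2*n)
          = if c + 1 + k < n then p (c+1+k) - b
            else if c = n - 1 then 2*n - 1 else 2*n - b + p (c+1+k) := by
      intro c hc
      by_cases h1 : c + 1 + k < n
      · rw [if_pos h1]
        have h2 := hlow c h1
        have h3 := hplt (c+1+k)
        rw [hmod2 _ (by omega) (by omega)]
        omega
      · rw [if_neg h1]
        by_cases h2 : c = n - 1
        · rw [if_pos h2, h2, htop]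
          rw [Nat.mod_eq_of_lt (by omega)]
          omega
        · rw [if_neg h2]
          have h3 := hhigh c (by omega) (by omega)
          exact Nat.mod_eq_of_lt (by omega)
    -- strict monotonicity of shifted L-positions
    have hsm : StrictMono (fun i : Fin n => u.symm (i + 1, false)) := by
      intro i i' hii'
      have ha : i.val < i'.val := hii'
      have ha' : i'.val < n := i'.isLt
      have hin : i.val < n - 1 := by omega
      show u.symm (i + 1, false) < u.symm (i' + 1, false)
      rw [Fin.lt_def, hfval, hfval]
      have hrw : ∀ (z : Fin n), p ((z + 1).val + k) = p (z.val + 1 + k) := by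
        intro z
        have hidx : (z + 1).val = (z.val + 1) % n := by
          rw [Fin.add_def, hone]
        rw [hidx]
        apply hpcongr
        rw [Nat.mod_add_mod]
      rw [hrw, hrw]
      rw [hval _ i.isLt, hval _ ha']
      by_cases h1 : i.val + 1 + k < n
      · rw [if_pos h1]
        by_cases h1' : i'.val + 1 + k < n
        · rw [if_pos h1']
          have hm := hpmono (i.val+1+k) (i'.val+1+k) (by
            rw [Nat.mod_eq_of_lt h1, Nat.mod_eq_of_lt h1']; omega)
          have := hlow i.val h1
          omega
        · rw [if_neg h1']
          by_cases h2' : i'.val = n - 1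
          · rw [if_pos h2']
            have := hplt (i.val+1+k)
            omega
          · rw [if_neg h2']
            have h3 := hhigh i'.val (by omega) (by omega)
            have := hplt (i.val+1+k)
            omega
      · rw [if_neg h1, if_neg (by omega : ¬ i.val = n - 1)]
        by_cases h1' : i'.val + 1 + k < n
        · exact absurd h1' (by omega)
        · rw [if_neg h1']
          by_cases h2' : i'.val = n - 1
          · rw [if_pos h2']
            have h3 := hhigh i.val (by omega) (by omega)
            omega
          · rw [if_neg h2']
            have h3 := hhigh i.val (by omega) (by omega)
            have h3' := hhigh i'.val (by omega) (by omega)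
            have hmn : (i.val+1+k) % n = i.val+1+k-n := by
              rw [Nat.mod_eq_sub_mod (by omega), Nat.mod_eq_of_lt (by omega)]
            have hmn' : (i'.val+1+k) % n = i'.val+1+k-n := by
              rw [Nat.mod_eq_sub_mod (by omega), Nat.mod_eq_of_lt (by omega)]
            have hm := hpmono (i.val+1+k) (i'.val+1+k) (by rw [hmn, hmn']; omega)
            omega
    have hinj : Function.Injective (fun j : Fin n => u.symm (j, false)) := by
      intro a a' h
      have h2 := congrArg u h
      simpa using h2
    have hsort : Tuple.sort (fun j : Fin n => u.symm (j, false)) = Equiv.addRight (1:Fin n) :=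
      sort_eq_addRight_one _ hinj hsm
    simp only [projLP]
    rw [hsort]
    have hpk1 : p k < p (k+1) := hpmono k (k+1) (by
      rw [Nat.mod_eq_of_lt hk, Nat.mod_eq_of_lt hk1]; omega)
    have hσsymm : ((Equiv.addRight (1:Fin n))⁻¹).symm (0 : Fin n) = 1 := by
      simp
    have hsa : ((permAct (Equiv.addRight (1:Fin n))⁻¹ u).symm ((0:Fin n), false)).val
        = p (k+1) - b := by
      rw [permAct_symm_apply, hσsymm, hfval, hone]
      rw [hpcongr (1+k) (k+1) (by rw [Nat.add_comm])]
      have h3 := hplt (k+1)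
      rw [hmod2 _ (by omega) (by omega)]
      omega
    rw [hsa, hu, permAct_shift, permAct_permAct, shift_shift]
    have hq : (w.symm ((⟨k+1, hk1⟩ : Fin n), false)).val = p (k+1) := by
      apply congrArg
      apply congrArg
      apply congrArg (fun j => (j, false))
      exact Fin.ext (Nat.mod_eq_of_lt hk1).symm
    rw [hq]
    have harg : p (k+1) - b + b = p (k+1) := by omega
    rw [harg]
    congr 2
    apply Equiv.ext
    intro x
    show ((Equiv.addRight (1:Fin n))⁻¹) (x - (k : Fin n)) = x - (((k+1 : ℕ)) : Fin n)
    push_cast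
    simp [sub_sub, sub_eq_add_neg, add_assoc]
    abel


end GaussCode


open GaussCode Fin.NatCast in
/-- for `n ≥ 2`, a left preferred `w` and `1 ≤ k ≤ n - 1`,
`(shift^LP)^k(w) = shift[m](π_*(w))` where `m` is the position of the entry
`(k+1, L)` and `π` sends `i` to `i - k (mod n)`. -/
theorem stmt5 (n : ℕ) [NeZero n] (hn : 2 ≤ n) (w : GaussCode n)
    (hw : IsLeftPreferred w) (k : ℕ) (hk1 : 1 ≤ k) (hk2 : k < n) :
    shiftLP^[k] w =
      shift ((w.symm ((⟨k, hk2⟩ : Fin n), false)).val)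
        (permAct (Equiv.subRight ((k : Fin n))) w) :=
  key hn w hw k hk2
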